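/- In the generic queue-based mutual exclusion algorithm, if in a valid execution history H process p executes its enqueue on M (in passage i) before q executes its enqueue (in passage j), and at the end of H process q is in the critical section in passage j, then p has already executed its dequeue in passage i. Consequently at most one process is in the critical section at any time (mutual exclusion). -/

import Mathlib

/-- The phase of a process in Algorithm GQME. -/
inductive GPhase
  | nearNCS   -- after dequeue, before the next enqueue (includes the NCS)
  | doorway   -- between enqueue and isHead
  | wait
  | doneWait
  | noWait    -- after isHead returned true, before dequeue
deriving DecidableEq

/-- A configuration of Algorithm GQME: the state (Q, V) of the atomic MutexQueue M,
the Wait registers, the phase of each process, and the number of passages each process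
has started (incremented at its enqueue). -/
structure GConfig (N : ℕ) where
  Q : List (Fin N)
  V : Finset (Fin N)
  Wait : Fin N → Bool
  phase : Fin N → GPhase
  pass : Fin N → ℕ

/-- Initially the queue is empty, all Wait registers are true, all processes are in
NEAR_NCS, and no passages have been started. -/
def gInit (N : ℕ) : GConfig N :=
  ⟨[], ∅, fun _ => true, fun _ => GPhase.nearNCS, fun _ => 0⟩

/-- Events (shared-memory steps) of Algorithm GQME. -/
inductive GEv (N : ℕ)
  | enq (p : Fin N)                       -- M.enqueue()               (line 2)
  | isHeadT (p : Fin N)                   -- M.isHead() returns true   (line 3)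
  | isHeadF (p : Fin N)                   -- M.isHead() returns false  (line 3)
  | exitWait (p : Fin N)
  | deq (p : Fin N) (r : Option (Fin N))
deriving DecidableEq

/-- The transition relation of Algorithm GQME, following the pseudocode and the
(non-broken) MutexQueue transition function. -/
inductive GStep (N : ℕ) : GConfig N → GEv N → GConfig N → Prop
  | enq (c : GConfig N) (p : Fin N) :
      c.phase p = GPhase.nearNCS → p ∉ c.Q →
      GStep N c (GEv.enq p)
        { c with Q := c.Q ++ [p],
                 phase := Function.update c.phase p GPhase.doorway,
                 pass := Function.update c.pass p (c.pass p + 1) }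
  | isHeadT (c : GConfig N) (p : Fin N) :
      c.phase p = GPhase.doorway → p ∈ c.Q → p ∉ c.V → c.Q.head? = some p →
      GStep N c (GEv.isHeadT p)
        { c with V := insert p c.V,
                 phase := Function.update c.phase p GPhase.noWait }
  | isHeadF (c : GConfig N) (p : Fin N) :
      c.phase p = GPhase.doorway → p ∈ c.Q → p ∉ c.V → c.Q.head? ≠ some p →
      GStep N c (GEv.isHeadF p)
        { c with V := insert p c.V,
                 phase := Function.update c.phase p GPhase.wait }
  | exitWait (c : GConfig N) (p : Fin N) :
      c.phase p = GPhase.wait → c.Wait p = false →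
      GStep N c (GEv.exitWait p)
        { c with Wait := Function.update c.Wait p true,
                 phase := Function.update c.phase p GPhase.doneWait }
  | deq (c : GConfig N) (p : Fin N) (r : Option (Fin N)) :
      (c.phase p = GPhase.noWait ∨ c.phase p = GPhase.doneWait) →
      c.Q.head? = some p → p ∈ c.V →
      r = (match c.Q[1]? with
           | some q => if q ∈ c.V then some q else none
           | none => none) →
      GStep N c (GEv.deq p r)
        { c with Q := c.Q.tail, V := c.V.erase p,
                 Wait := (match r with
                          | some q => Function.update c.Wait q false
                          | none => c.Wait),
                 phase := Function.update c.phase p GPhase.nearNCS }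

/-- `GReaches N c H c'`: the history H of events leads from configuration c to c'. -/
inductive GReaches (N : ℕ) : GConfig N → List (GEv N) → GConfig N → Prop
  | nil (c : GConfig N) : GReaches N c [] c
  | cons {c c1 c2 : GConfig N} {e : GEv N} {l : List (GEv N)} :
      GStep N c e c1 → GReaches N c1 l c2 → GReaches N c (e :: l) c2

/-- A process is in the critical section iff it is between line 3/5 and line 7. -/
def inCS {N : ℕ} (c : GConfig N) (p : Fin N) : Prop :=
  c.phase p = GPhase.noWait ∨ c.phase p = GPhase.doneWait

/-- Number of enqueue events by process p in history H. -/
def countEnq {N : ℕ} (H : List (GEv N)) (p : Fin N) : ℕ :=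
  H.count (GEv.enq p)

/-- Whether an event is a dequeue by process p. -/
def isDeqBy {N : ℕ} (p : Fin N) : GEv N → Bool
  | GEv.deq q _ => q == p
  | _ => false

/-- Number of dequeue events by process p in history H. -/
def countDeq {N : ℕ} (H : List (GEv N)) (p : Fin N) : ℕ :=
  (H.filter (isDeqBy p)).length

/-! ### Auxiliary development -/

section Aux

variable {N : ℕ}

lemma countEnq_append (H H' : List (GEv N)) (r : Fin N) :
    countEnq (H ++ H') r = countEnq H r + countEnq H' r :=
  List.count_append ..

lemma countEnq_snoc (H : List (GEv N)) (e : GEv N) (r : Fin N) :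
    countEnq (H ++ [e]) r = countEnq H r + (if e = GEv.enq r then 1 else 0) := by
  rcases eq_or_ne e (GEv.enq r) with rfl | h
  · simp [countEnq]
  · have h0 : List.count (GEv.enq r) [e] = 0 :=
      List.count_eq_zero.mpr (by simpa using (Ne.symm h))
    simp [countEnq, h, h0]

lemma countDeq_snoc (H : List (GEv N)) (e : GEv N) (r : Fin N) :
    countDeq (H ++ [e]) r = countDeq H r + (if isDeqBy r e then 1 else 0) := by
  cases h : isDeqBy r e <;> simp [countDeq, List.filter_append, h]

lemma countEnq_take_le (H : List (GEv N)) (n : ℕ) (r : Fin N) :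
    countEnq (H.take n) r ≤ countEnq H r :=
  (List.take_sublist n H).count_le _

lemma countEnq_key (H : List (GEv N)) (r : Fin N) (a m : ℕ) (ham : a < m)
    (hm : H[m]? = some (GEv.enq r)) :
    countEnq (H.take (a + 1)) r + 1 ≤ countEnq (H.take (m + 1)) r := by
  have h1 : H.take (m + 1) = H.take m ++ [GEv.enq r] := by
    rw [List.take_succ, hm]; rfl
  have h2 : H.take (a + 1) = (H.take m).take (a + 1) := by
    rw [List.take_take, min_eq_left (by omega)]
  rw [h1, countEnq_append, h2]
  have h3 := countEnq_take_le (H.take m) (a + 1) r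
  have h4 : countEnq [GEv.enq r] r = 1 := by simp [countEnq]
  omega

lemma countEnq_eq_take (H : List (GEv N)) (r : Fin N) (m : ℕ)
    (h : countEnq (H.drop (m + 1)) r = 0) :
    countEnq H r = countEnq (H.take (m + 1)) r := by
  conv_lhs => rw [← List.take_append_drop (m + 1) H]
  rw [countEnq_append, h, add_zero]

/-- `a` is the position of the pending (last) enqueue of `r` in `H`. -/
def RPend (H : List (GEv N)) (a : ℕ) (r : Fin N) : Prop :=
  H[a]? = some (GEv.enq r) ∧ countEnq (H.drop (a + 1)) r = 0

lemma RPend.lt_length {H : List (GEv N)} {a : ℕ} {r : Fin N} (h : RPend H a r) :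
    a < H.length :=
  (List.getElem?_eq_some_iff.mp h.1).1

lemma RPend.snoc {H : List (GEv N)} {a : ℕ} {r : Fin N} (h : RPend H a r)
    (e : GEv N) (he : e ≠ GEv.enq r) : RPend (H ++ [e]) a r := by
  have halen : a < H.length := h.lt_length
  refine ⟨?_, ?_⟩
  · rw [List.getElem?_append_left halen]; exact h.1
  · rw [List.drop_append_of_le_length (by omega), countEnq_snoc, h.2, if_neg he]

lemma RPend.last (H : List (GEv N)) (p : Fin N) :
    RPend (H ++ [GEv.enq p]) H.length p := by
  refine ⟨List.getElem?_concat_length .., ?_⟩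
  have : (H ++ [GEv.enq p]).drop (H.length + 1) = [] :=
    List.drop_eq_nil_of_le (by simp)
  rw [this]; rfl

lemma forall₂_exists_left {α β : Type*} {R : α → β → Prop} {A : List α} {B : List β}
    (h : List.Forall₂ R A B) {a : α} (ha : a ∈ A) : ∃ b ∈ B, R a b := by
  induction h with
  | nil => simp at ha
  | @cons x y l₁ l₂ hr _ ih =>
    rcases List.mem_cons.mp ha with rfl | ha
    · exact ⟨y, List.mem_cons_self, hr⟩
    · obtain ⟨b, hb, hrb⟩ := ih ha
      exact ⟨b, List.mem_cons_of_mem _ hb, hrb⟩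

lemma forall₂_exists_right {α β : Type*} {R : α → β → Prop} {A : List α} {B : List β}
    (h : List.Forall₂ R A B) {b : β} (hb : b ∈ B) : ∃ a ∈ A, R a b := by
  induction h with
  | nil => simp at hb
  | @cons x y l₁ l₂ hr _ ih =>
    rcases List.mem_cons.mp hb with rfl | hb
    · exact ⟨x, List.mem_cons_self, hr⟩
    · obtain ⟨a, ha, hra⟩ := ih hb
      exact ⟨a, List.mem_cons_of_mem _ ha, hra⟩

lemma forall₂_imp_mem {α β : Type*} {R R' : α → β → Prop} {A : List α} {B : List β}
    (h : List.Forall₂ R A B) (himp : ∀ a b, b ∈ B → R a b → R' a b) :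
    List.Forall₂ R' A B := by
  induction h with
  | nil => exact List.Forall₂.nil
  | @cons x y l₁ l₂ hr _ ih =>
    exact List.Forall₂.cons (himp x y (List.mem_cons_self) hr)
      (ih fun a b hb => himp a b (List.mem_cons_of_mem _ hb))

lemma head?_append_some {α : Type*} {Q : List α} {r : α} (h : Q.head? = some r)
    (l : List α) : (Q ++ l).head? = some r := by
  cases Q <;> simp_all

lemma head?_eq_cons {α : Type*} {Q : List α} {p : α} (h : Q.head? = some p) :
    Q = p :: Q.tail := by
  cases Q <;> simp_all

/-- The global inductive invariant of Algorithm GQME. -/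
structure GoodInv (N : ℕ) (H : List (GEv N)) (c : GConfig N) : Prop where
  nodup : c.Q.Nodup
  ncs : ∀ r, c.phase r = GPhase.nearNCS ↔ r ∉ c.Q
  ncsV : ∀ r, c.phase r = GPhase.nearNCS → r ∉ c.V
  door : ∀ r, c.phase r = GPhase.doorway → r ∉ c.V
  inV : ∀ r, c.phase r ≠ GPhase.nearNCS → c.phase r ≠ GPhase.doorway → r ∈ c.V
  hd : ∀ r, inCS c r → c.Q.head? = some r
  waitF : ∀ r, c.Wait r = false → c.Q.head? = some r ∧ c.phase r = GPhase.wait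
  cnt : ∀ r, countEnq H r = countDeq H r + (if r ∈ c.Q then 1 else 0)
  pend : ∃ A : List ℕ, A.Pairwise (· < ·) ∧ List.Forall₂ (RPend H) A c.Q

lemma goodInv_init : GoodInv N [] (gInit N) := by
  refine ⟨?_, ?_, ?_, ?_, ?_, ?_, ?_, ?_,
    ⟨[], List.Pairwise.nil, List.Forall₂.nil⟩⟩ <;>
    simp [gInit, inCS, countEnq, countDeq]

lemma GoodInv.step {H : List (GEv N)} {c c' : GConfig N} {e : GEv N}
    (inv : GoodInv N H c) (hs : GStep N c e c') : GoodInv N (H ++ [e]) c' := by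
  cases hs with
  | enq p hph hpQ =>
    have hpV : p ∉ c.V := inv.ncsV p hph
    refine ⟨?_, ?_, ?_, ?_, ?_, ?_, ?_, ?_, ?_⟩
    · simp only [List.nodup_append, List.nodup_singleton]
      exact ⟨inv.nodup, trivial, by simp; intro a ha h; subst h; exact hpQ ha⟩
    all_goals dsimp only
    · intro r
      rcases eq_or_ne r p with rfl | hr
      · simp [Function.update_self]
      · simp [Function.update_of_ne hr, inv.ncs r, hr]
    · intro r h
      rcases eq_or_ne r p with rfl | hr
      · simp [Function.update_self] at h
      · rw [Function.update_of_ne hr] at h; exact inv.ncsV r h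
    · intro r h
      rcases eq_or_ne r p with rfl | hr
      · exact hpV
      · rw [Function.update_of_ne hr] at h; exact inv.door r h
    · intro r h1 h2
      rcases eq_or_ne r p with rfl | hr
      · simp [Function.update_self] at h2
      · rw [Function.update_of_ne hr] at h1 h2; exact inv.inV r h1 h2
    · intro r hr
      rcases eq_or_ne r p with rfl | hne
      · simp [inCS, Function.update_self] at hr
      · simp only [inCS, Function.update_of_ne hne] at hr
        exact head?_append_some (inv.hd r hr) _
    · intro r hw
      obtain ⟨h1, h2⟩ := inv.waitF r hw
      have hne : r ≠ p := fun h => by rw [h, hph] at h2; exact absurd h2 (by simp)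
      exact ⟨head?_append_some h1 _, by rwa [Function.update_of_ne hne]⟩
    · intro r
      rw [countEnq_snoc, countDeq_snoc]
      have hd0 : isDeqBy r (GEv.enq p) = false := rfl
      have hc := inv.cnt r
      rcases eq_or_ne r p with rfl | hne
      · rw [if_neg hpQ, add_zero] at hc
        have hm : (r ∈ c.Q ++ [r]) ↔ True := by simp
        have he : (GEv.enq r = GEv.enq r) ↔ True := by simp
        simp only [hd0, Bool.false_eq_true, if_false, add_zero, hm, he, if_true]
        omega
      · have he : (GEv.enq p = GEv.enq r) ↔ False := by simp [Ne.symm hne]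
        have hm : (r ∈ c.Q ++ [p]) ↔ (r ∈ c.Q) := by simp [hne]
        simp only [hd0, Bool.false_eq_true, if_false, add_zero, hm, he]
        exact hc
    · obtain ⟨A, hpw, hf⟩ := inv.pend
      refine ⟨A ++ [H.length], ?_, ?_⟩
      · rw [List.pairwise_append]
        refine ⟨hpw, List.pairwise_singleton _ _, ?_⟩
        intro x hx y hy
        obtain ⟨r, _, hr⟩ := forall₂_exists_left hf hx
        simp only [List.mem_singleton] at hy
        subst hy
        exact hr.lt_length
      · refine List.rel_append ?_ (List.Forall₂.cons (RPend.last H p) List.Forall₂.nil)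
        refine forall₂_imp_mem hf fun a r hrQ hR => hR.snoc _ ?_
        simp only [ne_eq, GEv.enq.injEq]
        rintro rfl
        exact hpQ hrQ
  | isHeadT p hph hpQ hpV hhd =>
    refine ⟨inv.nodup, ?_, ?_, ?_, ?_, ?_, ?_, ?_, ?_⟩
    all_goals dsimp only
    · intro r
      rcases eq_or_ne r p with rfl | hr
      · simp [Function.update_self, hpQ]
      · simp [Function.update_of_ne hr, inv.ncs r]
    · intro r h
      rcases eq_or_ne r p with rfl | hr
      · simp [Function.update_self] at h
      · rw [Function.update_of_ne hr] at h
        simp [Finset.mem_insert, hr, inv.ncsV r h]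
    · intro r h
      rcases eq_or_ne r p with rfl | hr
      · simp [Function.update_self] at h
      · rw [Function.update_of_ne hr] at h
        simp [Finset.mem_insert, hr, inv.door r h]
    · intro r h1 h2
      rcases eq_or_ne r p with rfl | hr
      · exact Finset.mem_insert_self _ _
      · rw [Function.update_of_ne hr] at h1 h2
        exact Finset.mem_insert_of_mem (inv.inV r h1 h2)
    · intro r hr
      rcases eq_or_ne r p with rfl | hne
      · exact hhd
      · simp only [inCS, Function.update_of_ne hne] at hr
        exact inv.hd r hr
    · intro r hw
      obtain ⟨h1, h2⟩ := inv.waitF r hw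
      have hne : r ≠ p := fun h => by rw [h, hph] at h2; exact absurd h2 (by simp)
      exact ⟨h1, by rwa [Function.update_of_ne hne]⟩
    · intro r
      rw [countEnq_snoc, countDeq_snoc]
      have h1 : isDeqBy r (GEv.isHeadT p) = false := rfl
      have h2 : (GEv.isHeadT p = GEv.enq r) = False := by simp
      simp only [h1, h2, if_false]
      exact inv.cnt r
    · obtain ⟨A, hpw, hf⟩ := inv.pend
      exact ⟨A, hpw, forall₂_imp_mem hf fun a r _ hR => hR.snoc _ (by simp)⟩
  | isHeadF p hph hpQ hpV hhd =>
    refine ⟨inv.nodup, ?_, ?_, ?_, ?_, ?_, ?_, ?_, ?_⟩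
    all_goals dsimp only
    · intro r
      rcases eq_or_ne r p with rfl | hr
      · simp [Function.update_self, hpQ]
      · simp [Function.update_of_ne hr, inv.ncs r]
    · intro r h
      rcases eq_or_ne r p with rfl | hr
      · simp [Function.update_self] at h
      · rw [Function.update_of_ne hr] at h
        simp [Finset.mem_insert, hr, inv.ncsV r h]
    · intro r h
      rcases eq_or_ne r p with rfl | hr
      · simp [Function.update_self] at h
      · rw [Function.update_of_ne hr] at h
        simp [Finset.mem_insert, hr, inv.door r h]
    · intro r h1 h2
      rcases eq_or_ne r p with rfl | hr
      · exact Finset.mem_insert_self _ _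
      · rw [Function.update_of_ne hr] at h1 h2
        exact Finset.mem_insert_of_mem (inv.inV r h1 h2)
    · intro r hr
      rcases eq_or_ne r p with rfl | hne
      · simp [inCS, Function.update_self] at hr
      · simp only [inCS, Function.update_of_ne hne] at hr
        exact inv.hd r hr
    · intro r hw
      obtain ⟨h1, h2⟩ := inv.waitF r hw
      have hne : r ≠ p := fun h => by rw [h, hph] at h2; exact absurd h2 (by simp)
      exact ⟨h1, by rwa [Function.update_of_ne hne]⟩
    · intro r
      rw [countEnq_snoc, countDeq_snoc]
      have h1 : isDeqBy r (GEv.isHeadF p) = false := rfl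
      have h2 : (GEv.isHeadF p = GEv.enq r) = False := by simp
      simp only [h1, h2, if_false]
      exact inv.cnt r
    · obtain ⟨A, hpw, hf⟩ := inv.pend
      exact ⟨A, hpw, forall₂_imp_mem hf fun a r _ hR => hR.snoc _ (by simp)⟩
  | exitWait p hph hWp =>
    have hhd : c.Q.head? = some p := (inv.waitF p hWp).1
    refine ⟨inv.nodup, ?_, ?_, ?_, ?_, ?_, ?_, ?_, ?_⟩
    all_goals dsimp only
    · intro r
      rcases eq_or_ne r p with rfl | hr
      · simp only [Function.update_self]
        have hpQ : r ∈ c.Q := by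
          by_contra h
          rw [← inv.ncs r] at h
          rw [h] at hph; exact absurd hph (by simp)
        simp [hpQ]
      · simp [Function.update_of_ne hr, inv.ncs r]
    · intro r h
      rcases eq_or_ne r p with rfl | hr
      · simp [Function.update_self] at h
      · rw [Function.update_of_ne hr] at h; exact inv.ncsV r h
    · intro r h
      rcases eq_or_ne r p with rfl | hr
      · simp [Function.update_self] at h
      · rw [Function.update_of_ne hr] at h; exact inv.door r h
    · intro r h1 h2
      rcases eq_or_ne r p with rfl | hr
      · exact inv.inV r (by rw [hph]; simp) (by rw [hph]; simp)
      · rw [Function.update_of_ne hr] at h1 h2; exact inv.inV r h1 h2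
    · intro r hr
      rcases eq_or_ne r p with rfl | hne
      · exact hhd
      · simp only [inCS, Function.update_of_ne hne] at hr
        exact inv.hd r hr
    · intro r hw
      rcases eq_or_ne r p with rfl | hne
      · rw [Function.update_self] at hw; exact absurd hw (by simp)
      · rw [Function.update_of_ne hne] at hw
        obtain ⟨h1, _⟩ := inv.waitF r hw
        rw [hhd] at h1
        exact absurd (Option.some_injective _ h1.symm) hne
    · intro r
      rw [countEnq_snoc, countDeq_snoc]
      have h1 : isDeqBy r (GEv.exitWait p) = false := rfl
      have h2 : (GEv.exitWait p = GEv.enq r) = False := by simp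
      simp only [h1, h2, if_false]
      exact inv.cnt r
    · obtain ⟨A, hpw, hf⟩ := inv.pend
      exact ⟨A, hpw, forall₂_imp_mem hf fun a r _ hR => hR.snoc _ (by simp)⟩
  | deq p r hph hhd hpV hr =>
    have hQ : c.Q = p :: c.Q.tail := head?_eq_cons hhd
    have hnd : p ∉ c.Q.tail ∧ c.Q.tail.Nodup := by
      have := inv.nodup
      rw [hQ, List.nodup_cons] at this
      exact this
    have hmem_tail : ∀ s, s ≠ p → (s ∈ c.Q.tail ↔ s ∈ c.Q) := by
      intro s hs
      conv_rhs => rw [hQ]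
      simp [List.mem_cons, hs]
    have hWp_true : c.Wait p = true := by
      by_contra h
      have h' : c.Wait p = false := by simpa using h
      have := (inv.waitF p h').2
      rcases hph with h2 | h2 <;> rw [h2] at this <;> exact absurd this (by simp)
    refine ⟨hnd.2, ?_, ?_, ?_, ?_, ?_, ?_, ?_, ?_⟩
    all_goals dsimp only
    · intro s
      rcases eq_or_ne s p with rfl | hs
      · simp [Function.update_self, hnd.1]
      · rw [Function.update_of_ne hs, hmem_tail s hs]
        exact inv.ncs s
    · intro s h
      rcases eq_or_ne s p with rfl | hs
      · exact Finset.notMem_erase _ _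
      · rw [Function.update_of_ne hs] at h
        intro hmem
        exact inv.ncsV s h (Finset.mem_of_mem_erase hmem)
    · intro s h
      rcases eq_or_ne s p with rfl | hs
      · simp [Function.update_self] at h
      · rw [Function.update_of_ne hs] at h
        intro hmem
        exact inv.door s h (Finset.mem_of_mem_erase hmem)
    · intro s h1 h2
      rcases eq_or_ne s p with rfl | hs
      · simp [Function.update_self] at h1
      · rw [Function.update_of_ne hs] at h1 h2
        exact Finset.mem_erase.mpr ⟨hs, inv.inV s h1 h2⟩
    · intro s hs
      rcases eq_or_ne s p with rfl | hne
      · simp [inCS, Function.update_self] at hs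
      · simp only [inCS, Function.update_of_ne hne] at hs
        have := inv.hd s hs
        rw [hhd] at this
        exact absurd (Option.some_injective _ this.symm) hne
    · -- waitF
      intro s hw
      have hother : ∀ t, t ≠ p → c.Wait t = false → False := by
        intro t ht hwt
        have h1 := (inv.waitF t hwt).1
        rw [hhd] at h1
        exact ht (Option.some_injective _ h1.symm)
      rcases h1 : c.Q[1]? with _ | q0
      · rw [h1] at hr
        simp only at hr
        subst hr
        simp only at hw
        rcases eq_or_ne s p with rfl | hs
        · rw [hWp_true] at hw; exact absurd hw (by simp)
        · exact absurd hw (by intro h; exact hother s hs h)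
      · rw [h1] at hr
        by_cases hq0V : q0 ∈ c.V
        · simp only [hq0V, if_true] at hr
          subst hr
          simp only at hw
          have hq0t : c.Q.tail.head? = some q0 := by
            rw [hQ] at h1
            simp only [List.getElem?_cons_succ] at h1
            rwa [← List.head?_eq_getElem?] at h1
          have hq0_mem_tail : q0 ∈ c.Q.tail := by
            have := hq0t
            cases ht : c.Q.tail with
            | nil => rw [ht] at this; simp at this
            | cons x xs => rw [ht] at this; simp at this; simp [ht, this]
          have hq0p : q0 ≠ p := fun h => hnd.1 (h ▸ hq0_mem_tail)
          rcases eq_or_ne s q0 with rfl | hs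
          · refine ⟨hq0t, ?_⟩
            rw [Function.update_of_ne hq0p]
            have hmem : s ∈ c.Q := (hmem_tail s hq0p).mp hq0_mem_tail
            have hnn : c.phase s ≠ GPhase.nearNCS := by
              rw [ne_eq, inv.ncs s]; simpa using hmem
            have hnd2 : c.phase s ≠ GPhase.doorway := fun h => inv.door s h hq0V
            have hncs : ¬ inCS c s := by
              intro h
              have := inv.hd s h
              rw [hhd] at this
              exact hq0p (Option.some_injective _ this.symm)
            cases hps : c.phase s with
            | nearNCS => exact absurd hps hnn
            | doorway => exact absurd hps hnd2
            | wait => rfl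
            | doneWait => exact absurd (Or.inr hps) hncs
            | noWait => exact absurd (Or.inl hps) hncs
          · rw [Function.update_of_ne hs] at hw
            rcases eq_or_ne s p with rfl | hsp
            · rw [hWp_true] at hw; exact absurd hw (by simp)
            · exact absurd hw (by intro h; exact hother s hsp h)
        · simp only [hq0V, if_false] at hr
          subst hr
          simp only at hw
          rcases eq_or_ne s p with rfl | hs
          · rw [hWp_true] at hw; exact absurd hw (by simp)
          · exact absurd hw (by intro h; exact hother s hs h)
    · intro s
      rw [countEnq_snoc, countDeq_snoc]
      have h2 : (GEv.deq p r = GEv.enq s) ↔ False := by simp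
      have hc := inv.cnt s
      rcases eq_or_ne s p with rfl | hs
      · have hdb : (isDeqBy s (GEv.deq s r) = true) ↔ True := by simp [isDeqBy]
        rw [if_pos (by rw [hQ]; exact List.mem_cons_self)] at hc
        have hm : (s ∈ c.Q.tail) ↔ False := by simp [hnd.1]
        simp only [h2, hdb, hm, if_true, if_false, add_zero]
        omega
      · have hdb : (isDeqBy s (GEv.deq p r) = true) ↔ False := by
          simp [isDeqBy, Ne.symm hs]
        simp only [h2, hdb, if_false, add_zero, hmem_tail s hs]
        exact hc
    · obtain ⟨A, hpw, hf⟩ := inv.pend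
      rw [hQ] at hf
      obtain ⟨a0, A', hR0, hf', rfl⟩ := List.forall₂_cons_right_iff.mp hf
      refine ⟨A', (List.pairwise_cons.mp hpw).2, ?_⟩
      exact forall₂_imp_mem hf' fun a t _ hR => hR.snoc _ (by simp)

lemma goodInv_reaches {c0 c : GConfig N} {H : List (GEv N)}
    (hr : GReaches N c0 H c) :
    ∀ G : List (GEv N), GoodInv N G c0 → GoodInv N (G ++ H) c := by
  induction hr with
  | nil c => intro G h; simpa using h
  | @cons c c1 c2 e l hs _ ih =>
    intro G h
    have := ih (G ++ [e]) (h.step hs)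
    simpa using this

lemma goodInv_of_run {c : GConfig N} {H : List (GEv N)}
    (hr : GReaches N (gInit N) H c) : GoodInv N H c := by
  have := goodInv_reaches hr [] goodInv_init
  simpa using this

end Aux

/-- Lemma 5.2 and Corollary 5.3: if in a valid history H process p executes its i-th
enqueue (at position a) before q executes its j-th enqueue (at position b), and at the
end of H process q is in the CS in passage j (its j-th and last enqueue), then p has
already executed its dequeue in passage i; consequently at most one process is in the
critical section at the end of any valid history (mutual exclusion). -/
theorem fcfs_dequeue_and_mutex (N : ℕ) (H : List (GEv N)) (c : GConfig N)
    (hrun : GReaches N (gInit N) H c)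
    (p q : Fin N) (i j a b : ℕ)
    (hab : a < b)
    (ha : H[a]? = some (GEv.enq p))
    (hb : H[b]? = some (GEv.enq q))
    (hi : countEnq (H.take (a + 1)) p = i)
    (hj : countEnq (H.take (b + 1)) q = j)
    (hjlast : countEnq H q = j)
    (hcs : inCS c q) :
    i ≤ countDeq H p ∧ ∀ x y : Fin N, inCS c x → inCS c y → x = y := by
  have inv := goodInv_of_run hrun
  have hmutex : ∀ x y : Fin N, inCS c x → inCS c y → x = y := by
    intro x y hx hy
    have h1 := inv.hd x hx
    have h2 := inv.hd y hy
    rw [h1] at h2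
    exact Option.some_injective _ h2
  refine ⟨?_, hmutex⟩
  subst hi
  by_cases hpQ : p ∈ c.Q
  · have hqhd : c.Q.head? = some q := inv.hd q hcs
    have hQ : c.Q = q :: c.Q.tail := head?_eq_cons hqhd
    obtain ⟨A, hpw, hf⟩ := inv.pend
    rw [hQ] at hf
    obtain ⟨a0, A', hR0, hf', rfl⟩ := List.forall₂_cons_right_iff.mp hf
    have hba0 : b ≤ a0 := by
      by_contra h
      push_neg at h
      have hbmem : GEv.enq q ∈ H.drop (a0 + 1) := by
        have hidx : (H.drop (a0 + 1))[b - (a0 + 1)]? = some (GEv.enq q) := by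
          rw [List.getElem?_drop]
          have heq : a0 + 1 + (b - (a0 + 1)) = b := by omega
          rw [heq]; exact hb
        exact List.mem_of_getElem? hidx
      have hz := hR0.2
      simp only [countEnq, List.count_eq_zero] at hz
      exact hz hbmem
    obtain ⟨ap, hapge, hRp⟩ : ∃ ap, b ≤ ap ∧ RPend H ap p := by
      rcases eq_or_ne p q with rfl | hpq
      · exact ⟨a0, hba0, hR0⟩
      · have hpt : p ∈ c.Q.tail := by
          rw [hQ] at hpQ
          rcases List.mem_cons.mp hpQ with h | h
          · exact absurd h hpq
          · exact h
        obtain ⟨ap, hapA, hRp⟩ := forall₂_exists_right hf' hpt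
        have : a0 < ap := (List.pairwise_cons.mp hpw).1 ap hapA
        exact ⟨ap, by omega, hRp⟩
    have haap : a < ap := by omega
    have h1 : countEnq H p = countEnq (H.take (ap + 1)) p :=
      countEnq_eq_take H p ap hRp.2
    have h2 := countEnq_key H p a ap haap hRp.1
    have h3 := inv.cnt p
    rw [if_pos hpQ] at h3
    have h4 := countEnq_take_le H (ap + 1) p
    omega
  · have h3 := inv.cnt p
    rw [if_neg hpQ, add_zero] at h3
    have := countEnq_take_le H (a + 1) p
    omega
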